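/- arXiv:1701.03561 — 2 statements merged into one kernel-verified Lean document; each statement's English description precedes it below -/
import Mathlib

section
/- For every m ∈ ℤ, every p ≥ 1 and every i ≥ 1: if i = p then πₚ(G_m^{[p]}) = G_{m−1}^{[p+1]}, and if i ≠ p then πᵢ(G_m^{[p]}) = −β·G_m^{[p]}. -/
/- Common setup: `R = ℤ[β][[x₀,x₁,x₂,…]]` with `β = Polynomial.X`; only the
variables `x i` for `i ≥ 1` are used in the statements. -/

attribute [local instance] Classical.propDecidable

noncomputable section

abbrev A : Type := Polynomial ℤ
abbrev R : Type := MvPowerSeries ℕ A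

/-- the element β -/
def bR : R := MvPowerSeries.C (σ := ℕ) (R := A) Polynomial.X

/-- the variable `x i` -/
def Xv (i : ℕ) : R := MvPowerSeries.X i

/-- total degree of a monomial -/
def degSum (d : ℕ →₀ ℕ) : ℕ := d.sum fun _ n => n

/-- the ring automorphism `s i` exchanging `x i` and `x (i+1)` -/
def sOp (i : ℕ) (f : R) : R := fun d => f (Finsupp.equivMapDomain (Equiv.swap i (i+1)) d)

/-- the divided difference operator `π i`, characterized by
`(x i - x (i+1)) * π i f = (1 + β x (i+1)) f - (1 + β x i) (s i f)`. -/
def ddiff (i : ℕ) (f : R) : R :=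
  Classical.epsilon fun gq : R =>
    (Xv i - Xv (i+1)) * gq = (1 + bR * Xv (i+1)) * f - (1 + bR * Xv i) * sOp i f

/-- complete homogeneous symmetric function of degree `j` in the variables `x_q, …, x_p` -/
def hsym (q p : ℕ) (j : ℤ) : R := fun d =>
  if (∀ k ∈ d.support, q ≤ k ∧ k ≤ p) ∧ (degSum d : ℤ) = j then 1 else 0

/-- `∏_{i=q}^{p} (1 + β x_i)` -/
def prodOneAdd (q p : ℕ) : R := ∏ i ∈ Finset.Icc q p, (1 + bR * Xv i)

/-- `G_m^{[p/q]} = Σ_{s≥0} (−β)^s (∏_{i=q}^p (1+βx_i)) h_{m+s}(x_q,…,x_p)`,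
defined coefficientwise (only the terms with `m + s ≤ deg d` can contribute to the
coefficient at a monomial `d`). -/
def Gsk (p q : ℕ) (m : ℤ) : R := fun d =>
  ∑ s ∈ Finset.range (((degSum d : ℤ) - m).toNat + 1),
    (-Polynomial.X : A) ^ s * MvPowerSeries.coeff (R := A) d (prodOneAdd q p * hsym q p (m + s))

/-- `G_m^{[p]} = G_m^{[p/1]}` -/
def Gk (p : ℕ) (m : ℤ) : R := Gsk p 1 m

/-- the geometric series `Σ_{s≥0} (−β x_i)^s = 1/(1+βx_i)` -/
def geom (i : ℕ) : R := fun d =>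
  if d.support ⊆ {i} then (-Polynomial.X : A) ^ (d i) else 0

/-- substitution of `x₁ = 0` -/
def setX1Zero (f : R) : R := fun d => if d 1 = 0 then f d else 0

/-- generalized binomial coefficient `C(c,s) = c(c−1)⋯(c−s+1)/s!` for `c : ℤ` -/
def intChoose (c : ℤ) (s : ℕ) : ℤ :=
  if 0 ≤ c then (c.toNat.choose s : ℤ) else (-1) ^ s * (((s : ℤ) - 1 - c).toNat.choose s : ℤ)

/-- `Σ_{s≥0} C(c,s) β^s G_{m+s}^{[p/q]}`, defined coefficientwise. -/
def JT (p q : ℕ) (c m : ℤ) : R := fun d =>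
  ∑ s ∈ Finset.range (((degSum d : ℤ) - m).toNat + 1),
    ((intChoose c s : ℤ) : A) * Polynomial.X ^ s * MvPowerSeries.coeff (R := A) d (Gsk p q (m + s))

/-- the Jacobi–Trudi type determinant `G̃_{λ/μ,f/g}` (rows and columns indexed by
`Fin r`, with `i : Fin r` representing the 1-based index `i+1`). -/
def GtildeSkew (r : ℕ) (lam mu f g : Fin r → ℕ) : R :=
  Matrix.det (Matrix.of fun i j : Fin r =>
    JT (f i) (g j) ((i : ℤ) - (j : ℤ))
      ((lam i : ℤ) - (mu j : ℤ) + (j : ℤ) - (i : ℤ)))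

/-- the Jacobi–Trudi type determinant `G̃_{λ,f}` -/
def Gtilde (r : ℕ) (lam f : Fin r → ℕ) : R :=
  GtildeSkew r lam (fun _ => 0) f (fun _ => 1)

/-- flagged skew set-valued tableaux of shape `λ/μ` with flagging `f/g`:
a tableau assigns to the box in row `i` (1-based index `i+1`), column `j`
(with `μᵢ < j ≤ λᵢ`) a nonempty subset of `{gᵢ,…,fᵢ}`, weakly increasing
along rows and strictly increasing along columns; boxes outside the shape
carry `∅`. -/
def IsFSVT (r : ℕ) (lam mu f g : Fin r → ℕ) (T : Fin r × ℕ → Finset ℕ) : Prop :=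
  (∀ (i : Fin r) (j : ℕ), ¬ (mu i < j ∧ j ≤ lam i) → T (i, j) = ∅) ∧
  (∀ (i : Fin r) (j : ℕ), mu i < j → j ≤ lam i → (T (i, j)).Nonempty) ∧
  (∀ (i : Fin r) (j k : ℕ), k ∈ T (i, j) → g i ≤ k ∧ k ≤ f i) ∧
  (∀ (i : Fin r) (j : ℕ), mu i < j → j + 1 ≤ lam i →
     ∀ a ∈ T (i, j), ∀ b ∈ T (i, j + 1), a ≤ b) ∧
  (∀ (i : Fin r) (h : (i : ℕ) + 1 < r) (j : ℕ),
     mu i < j → j ≤ lam i → mu ⟨(i : ℕ) + 1, h⟩ < j → j ≤ lam ⟨(i : ℕ) + 1, h⟩ →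
     ∀ a ∈ T (i, j), ∀ b ∈ T (⟨(i : ℕ) + 1, h⟩, j), a < b)

/-- the total number `|T|` of entries of a tableau -/
def entriesCount (r : ℕ) (lam mu : Fin r → ℕ) (T : Fin r × ℕ → Finset ℕ) : ℕ :=
  ∑ i : Fin r, ∑ j ∈ Finset.Ioc (mu i) (lam i), (T (i, j)).card

/-- `|λ/μ|` -/
def shapeSize (r : ℕ) (lam mu : Fin r → ℕ) : ℕ := ∑ i : Fin r, (lam i - mu i)

/-- the weight `β^{|T|−|λ/μ|} ∏_{k∈T} x_k` of a tableau -/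
def wt (r : ℕ) (lam mu : Fin r → ℕ) (T : Fin r × ℕ → Finset ℕ) : R :=
  bR ^ (entriesCount r lam mu T - shapeSize r lam mu) *
    ∏ i : Fin r, ∏ j ∈ Finset.Ioc (mu i) (lam i), ∏ k ∈ T (i, j), Xv k

/-- the flagged skew Grothendieck polynomial `G_{λ/μ,f/g}` as the (finite) sum of
the weights of all flagged skew set-valued tableaux -/
def GF (r : ℕ) (lam mu f g : Fin r → ℕ) : R :=
  ∑ᶠ (T : Fin r × ℕ → Finset ℕ) (_ : IsFSVT r lam mu f g T), wt r lam mu T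

/- permutations: `w ∈ S_n` is encoded as a permutation of `ℕ` fixing `0` and
everything `> n`. -/

/-- `w` belongs to `S_n` -/
def isSn (n : ℕ) (w : Equiv.Perm ℕ) : Prop := ∀ k, k = 0 ∨ n < k → w k = k

/-- Coxeter length = number of inversions -/
def len (n : ℕ) (w : Equiv.Perm ℕ) : ℕ :=
  (((Finset.Icc 1 n) ×ˢ (Finset.Icc 1 n)).filter fun pr : ℕ × ℕ =>
    pr.1 < pr.2 ∧ w pr.2 < w pr.1).card

/-- the rank function `r_w(p,q) = #{i ≤ p : w(i) ≤ q}` -/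
def rankf (w : Equiv.Perm ℕ) (p q : ℕ) : ℕ :=
  ((Finset.Icc 1 p).filter fun i => w i ≤ q).card

/-- the diagram `D(w)` -/
def inD (n : ℕ) (w : Equiv.Perm ℕ) (p q : ℕ) : Prop :=
  1 ≤ p ∧ p ≤ n ∧ 1 ≤ q ∧ q ≤ n ∧ q < w p ∧ p < w.symm q

/-- the essential set `Ess(w)` -/
def inEss (n : ℕ) (w : Equiv.Perm ℕ) (p q : ℕ) : Prop :=
  inD n w p q ∧ ¬ inD n w (p+1) q ∧ ¬ inD n w p (q+1)

/-- `w ∈ S_n` is vexillary: it avoids the pattern 2143 -/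
def Vexillary (n : ℕ) (w : Equiv.Perm ℕ) : Prop :=
  ¬ ∃ a b c d : ℕ, 1 ≤ a ∧ a < b ∧ b < c ∧ c < d ∧ d ≤ n ∧
      w b < w a ∧ w a < w d ∧ w d < w c

section Aux

open MvPowerSeries Finsupp Finset

local notation "sw" i => Equiv.swap i (i+1)

lemma Emap_apply (i : ℕ) (d : ℕ →₀ ℕ) (k : ℕ) :
    Finsupp.equivMapDomain (Equiv.swap i (i+1)) d k = d (Equiv.swap i (i+1) k) := by
  rw [Finsupp.equivMapDomain_apply, Equiv.symm_swap]

lemma Emap_Emap (i : ℕ) (d : ℕ →₀ ℕ) :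
    Finsupp.equivMapDomain (Equiv.swap i (i+1))
      (Finsupp.equivMapDomain (Equiv.swap i (i+1)) d) = d := by
  ext k; rw [Emap_apply, Emap_apply, Equiv.swap_apply_self]

lemma degSum_add (a b : ℕ →₀ ℕ) : degSum (a + b) = degSum a + degSum b :=
  Finsupp.sum_add_index' (fun _ => rfl) (fun _ _ _ => rfl)

lemma degSum_Emap (i : ℕ) (d : ℕ →₀ ℕ) :
    degSum (Finsupp.equivMapDomain (Equiv.swap i (i+1)) d) = degSum d := by
  rw [Finsupp.equivMapDomain_eq_mapDomain, degSum, degSum,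
    Finsupp.sum_mapDomain_index (fun _ => rfl) (fun _ _ _ => rfl)]

lemma degSum_single (s n : ℕ) : degSum (Finsupp.single s n) = n := by
  classical
  simp [degSum, Finsupp.sum_single_index]

lemma degSum_sub_single {d : ℕ →₀ ℕ} {s : ℕ} (h : 1 ≤ d s) :
    degSum (d - Finsupp.single s 1) + 1 = degSum d := by
  have hd : d - Finsupp.single s 1 + Finsupp.single s 1 = d := by
    ext k
    rw [Finsupp.add_apply, Finsupp.tsub_apply, Finsupp.single_apply]
    by_cases hk : s = k
    · subst hk; rw [if_pos rfl]; omega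
    · rw [if_neg hk]; omega
  conv_rhs => rw [← hd]
  rw [degSum_add, degSum_single]

lemma coeff_sOp (i : ℕ) (f : R) (d : ℕ →₀ ℕ) :
    MvPowerSeries.coeff (R := A) d (sOp i f) =
      MvPowerSeries.coeff (R := A) (Finsupp.equivMapDomain (Equiv.swap i (i+1)) d) f := rfl

lemma Emap_add (i : ℕ) (a b : ℕ →₀ ℕ) :
    Finsupp.equivMapDomain (Equiv.swap i (i+1)) (a + b) =
      Finsupp.equivMapDomain (Equiv.swap i (i+1)) a +
        Finsupp.equivMapDomain (Equiv.swap i (i+1)) b := by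
  ext k; simp [Emap_apply]

lemma sOp_mul (i : ℕ) (f g : R) : sOp i (f * g) = sOp i f * sOp i g := by
  classical
  ext d : 1
  rw [coeff_sOp, MvPowerSeries.coeff_mul, MvPowerSeries.coeff_mul]
  refine Finset.sum_equiv
    (Equiv.prodCongr (Finsupp.equivCongrLeft (Equiv.swap i (i+1)))
      (Finsupp.equivCongrLeft (Equiv.swap i (i+1)))) ?_ ?_
  · rintro ⟨a, b⟩
    simp only [Finset.HasAntidiagonal.mem_antidiagonal, Equiv.prodCongr_apply, Prod.map,
      Finsupp.equivCongrLeft_apply]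
    constructor
    · intro hab
      rw [← Emap_Emap i d, ← hab, Emap_add]
    · intro hab
      have h2 := congrArg (Finsupp.equivMapDomain (Equiv.swap i (i+1))) hab
      rw [Emap_add, Emap_Emap, Emap_Emap] at h2
      exact h2
  · rintro ⟨a, b⟩ _
    simp only [Equiv.prodCongr_apply, Prod.map, Finsupp.equivCongrLeft_apply]
    rw [coeff_sOp, coeff_sOp, Emap_Emap, Emap_Emap]

lemma Emap_eq_zero_iff (i : ℕ) (d : ℕ →₀ ℕ) :
    Finsupp.equivMapDomain (Equiv.swap i (i+1)) d = 0 ↔ d = 0 := by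
  constructor
  · intro h
    rw [← Emap_Emap i d, h]
    simp
  · intro h; rw [h]; simp

lemma Emap_eq_single_iff (i j : ℕ) (d : ℕ →₀ ℕ) :
    Finsupp.equivMapDomain (Equiv.swap i (i+1)) d = Finsupp.single j 1 ↔
      d = Finsupp.single (Equiv.swap i (i+1) j) 1 := by
  constructor
  · intro h
    rw [← Emap_Emap i d, h, Finsupp.equivMapDomain_single]
  · intro h
    rw [h, Finsupp.equivMapDomain_single, Equiv.swap_apply_self]

lemma sOp_one (i : ℕ) : sOp i (1 : R) = 1 := by
  classical
  ext d : 1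
  rw [coeff_sOp, MvPowerSeries.coeff_one, MvPowerSeries.coeff_one]
  simp only [Emap_eq_zero_iff]

lemma sOp_C (i : ℕ) (a : A) : sOp i (MvPowerSeries.C (σ := ℕ) (R := A) a) = MvPowerSeries.C (σ := ℕ) (R := A) a := by
  classical
  ext d : 1
  rw [coeff_sOp, MvPowerSeries.coeff_C, MvPowerSeries.coeff_C]
  simp only [Emap_eq_zero_iff]

/-- `sOp i` as a ring homomorphism -/
def sHom (i : ℕ) : R →+* R where
  toFun := sOp i
  map_one' := sOp_one i
  map_mul' := sOp_mul i
  map_zero' := rfl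
  map_add' := fun _ _ => rfl

lemma sHom_apply (i : ℕ) (f : R) : sHom i f = sOp i f := rfl

lemma sOp_bR (i : ℕ) : sOp i bR = bR := sOp_C i Polynomial.X

lemma sOp_X (i j : ℕ) : sOp i (Xv j) = Xv (Equiv.swap i (i+1) j) := by
  classical
  ext d : 1
  rw [coeff_sOp, Xv, Xv, MvPowerSeries.coeff_X, MvPowerSeries.coeff_X]
  simp only [Emap_eq_single_iff]

end Aux
section Aux2

lemma coeff_hsym (q P : ℕ) (j : ℤ) (e : ℕ →₀ ℕ) :
    MvPowerSeries.coeff (R := A) e (hsym q P j) =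
      if (∀ k ∈ e.support, q ≤ k ∧ k ≤ P) ∧ (degSum e : ℤ) = j then 1 else 0 := rfl

lemma coeff_Gsk (P q : ℕ) (m : ℤ) (d : ℕ →₀ ℕ) :
    MvPowerSeries.coeff (R := A) d (Gsk P q m) =
      ∑ s ∈ Finset.range (((degSum d : ℤ) - m).toNat + 1),
        (-Polynomial.X : A) ^ s *
          MvPowerSeries.coeff (R := A) d (prodOneAdd q P * hsym q P (m + s)) := rfl

lemma coeff_X_mul_hsym (s P : ℕ) (hs : 1 ≤ s) (hsP : s ≤ P) (j : ℤ) (d : ℕ →₀ ℕ) :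
    MvPowerSeries.coeff (R := A) d (Xv s * hsym 1 P j) =
      if (∀ k ∈ d.support, 1 ≤ k ∧ k ≤ P) ∧ (degSum d : ℤ) = j + 1 ∧ 1 ≤ d s
        then 1 else 0 := by
  classical
  rw [show Xv s = MvPowerSeries.monomial (R := A) (Finsupp.single s 1) (1 : A) from rfl,
    MvPowerSeries.coeff_monomial_mul]
  by_cases hds : 1 ≤ d s
  · have hle : Finsupp.single s 1 ≤ d := Finsupp.single_le_iff.mpr hds
    rw [if_pos hle, one_mul, coeff_hsym]
    have hdeg : degSum (d - Finsupp.single s 1) + 1 = degSum d := degSum_sub_single hds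
    have hsupp : (∀ k ∈ (d - Finsupp.single s 1).support, 1 ≤ k ∧ k ≤ P) ↔
        (∀ k ∈ d.support, 1 ≤ k ∧ k ≤ P) := by
      constructor
      · intro H k hk
        rcases eq_or_ne k s with rfl | hne
        · exact ⟨hs, hsP⟩
        · refine H k ?_
          rw [Finsupp.mem_support_iff] at hk ⊢
          rw [Finsupp.tsub_apply, Finsupp.single_apply, if_neg (fun h => hne h.symm)]
          omega
      · intro H k hk
        refine H k ?_
        rw [Finsupp.mem_support_iff] at hk ⊢
        rw [Finsupp.tsub_apply] at hk
        omega
    have hiff : ((∀ k ∈ (d - Finsupp.single s 1).support, 1 ≤ k ∧ k ≤ P) ∧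
          (degSum (d - Finsupp.single s 1) : ℤ) = j) ↔
        ((∀ k ∈ d.support, 1 ≤ k ∧ k ≤ P) ∧ (degSum d : ℤ) = j + 1 ∧ 1 ≤ d s) := by
      rw [hsupp]
      constructor
      · rintro ⟨h1, h2⟩
        exact ⟨h1, by omega, hds⟩
      · rintro ⟨h1, h2, _⟩
        exact ⟨h1, by omega⟩
    simp only [hiff]
  · rw [if_neg (fun hle => hds (Finsupp.single_le_iff.mp hle)),
      if_neg (fun hc => hds hc.2.2)]

lemma supp_cond_p (p : ℕ) (hp : 1 ≤ p) (d : ℕ →₀ ℕ) :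
    (∀ k ∈ d.support, 1 ≤ k ∧ k ≤ p) ↔
      ((∀ k ∈ d.support, 1 ≤ k ∧ k ≤ p+1) ∧ d (p+1) = 0) := by
  constructor
  · intro H
    refine ⟨fun k hk => ⟨(H k hk).1, by have := (H k hk).2; omega⟩, ?_⟩
    by_contra h
    have := H (p+1) (Finsupp.mem_support_iff.mpr h)
    omega
  · rintro ⟨hB, h0⟩ k hk
    have h1 := hB k hk
    have h2 : k ≠ p+1 := by
      intro e; rw [e] at hk; exact (Finsupp.mem_support_iff.mp hk) h0
    omega

lemma supp_cond_swap (p : ℕ) (hp : 1 ≤ p) (d : ℕ →₀ ℕ) :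
    (∀ k ∈ (Finsupp.equivMapDomain (Equiv.swap p (p+1)) d).support, 1 ≤ k ∧ k ≤ p) ↔
      ((∀ k ∈ d.support, 1 ≤ k ∧ k ≤ p+1) ∧ d p = 0) := by
  have hmem : ∀ k, k ∈ (Finsupp.equivMapDomain (Equiv.swap p (p+1)) d).support ↔
      d (Equiv.swap p (p+1) k) ≠ 0 := by
    intro k; rw [Finsupp.mem_support_iff, Emap_apply]
  constructor
  · intro H
    constructor
    · intro k hk
      have hk' : d k ≠ 0 := Finsupp.mem_support_iff.mp hk
      have h2 := H (Equiv.swap p (p+1) k)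
        ((hmem _).mpr (by rw [Equiv.swap_apply_self]; exact hk'))
      rcases eq_or_ne k p with rfl | hkp
      · rw [Equiv.swap_apply_left] at h2; omega
      rcases eq_or_ne k (p+1) with rfl | hkp1
      · rw [Equiv.swap_apply_right] at h2; omega
      · rw [Equiv.swap_apply_of_ne_of_ne hkp hkp1] at h2; omega
    · by_contra h0
      have := H (p+1) ((hmem _).mpr (by rw [Equiv.swap_apply_right]; exact h0))
      omega
  · rintro ⟨hB, h0⟩ k hk
    rw [hmem] at hk
    rcases eq_or_ne k p with rfl | hkp
    · exact ⟨hp, le_rfl⟩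
    rcases eq_or_ne k (p+1) with rfl | hkp1
    · rw [Equiv.swap_apply_right] at hk; exact absurd h0 hk
    · rw [Equiv.swap_apply_of_ne_of_ne hkp hkp1] at hk
      have := hB k (Finsupp.mem_support_iff.mpr hk)
      omega

lemma hsym_swap (p : ℕ) (hp : 1 ≤ p) (j : ℤ) :
    hsym 1 p j - sOp p (hsym 1 p j) = (Xv p - Xv (p+1)) * hsym 1 (p+1) (j-1) := by
  ext d : 1
  rw [map_sub, sub_mul, map_sub]
  rw [coeff_X_mul_hsym p (p+1) hp (by omega) (j-1) d,
    coeff_X_mul_hsym (p+1) (p+1) (by omega) le_rfl (j-1) d]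
  rw [coeff_hsym, coeff_sOp, coeff_hsym, degSum_Emap]
  have e1 := supp_cond_p p hp d
  have e2 := supp_cond_swap p hp d
  have e3 : j - 1 + 1 = j := by ring
  simp only [e1, e2, e3]
  by_cases hB : ∀ k ∈ d.support, 1 ≤ k ∧ k ≤ p+1 <;>
    by_cases hj : (degSum d : ℤ) = j <;>
    by_cases h0 : d p = 0 <;>
    by_cases h1 : d (p+1) = 0 <;>
    simp [hB, hj, h0, h1, Nat.one_le_iff_ne_zero]

end Aux2
section Aux3

lemma swap_keeps {i P : ℕ} (hi : 1 ≤ i) (hiP : i ≠ P) {k : ℕ} (hk1 : 1 ≤ k) (hk2 : k ≤ P) :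
    1 ≤ Equiv.swap i (i+1) k ∧ Equiv.swap i (i+1) k ≤ P := by
  rcases eq_or_ne k i with rfl | h1
  · rw [Equiv.swap_apply_left]; omega
  rcases eq_or_ne k (i+1) with rfl | h2
  · rw [Equiv.swap_apply_right]; omega
  · rw [Equiv.swap_apply_of_ne_of_ne h1 h2]; omega

lemma sOp_hsym (i P : ℕ) (hi : 1 ≤ i) (hiP : i ≠ P) (j : ℤ) :
    sOp i (hsym 1 P j) = hsym 1 P j := by
  ext d : 1
  rw [coeff_sOp, coeff_hsym, coeff_hsym, degSum_Emap]
  have hiff : (∀ k ∈ (Finsupp.equivMapDomain (Equiv.swap i (i+1)) d).support,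
        1 ≤ k ∧ k ≤ P) ↔ (∀ k ∈ d.support, 1 ≤ k ∧ k ≤ P) := by
    constructor
    · intro H k hk
      have hk' := Finsupp.mem_support_iff.mp hk
      have h2 := H (Equiv.swap i (i+1) k)
        (by rw [Finsupp.mem_support_iff, Emap_apply, Equiv.swap_apply_self]; exact hk')
      have h3 := swap_keeps hi hiP h2.1 h2.2
      rwa [Equiv.swap_apply_self] at h3
    · intro H k hk
      rw [Finsupp.mem_support_iff, Emap_apply] at hk
      have h2 := H _ (Finsupp.mem_support_iff.mpr hk)
      have h3 := swap_keeps hi hiP h2.1 h2.2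
      rwa [Equiv.swap_apply_self] at h3
  simp only [hiff]

lemma sOp_one_add (i k : ℕ) : sOp i (1 + bR * Xv k) = 1 + bR * Xv (Equiv.swap i (i+1) k) := by
  rw [← sHom_apply]
  simp only [map_add, map_one, map_mul]
  rw [sHom_apply, sHom_apply, sOp_bR, sOp_X]

lemma sOp_prodOneAdd (i P : ℕ) (hi : 1 ≤ i) (hiP : i ≠ P) :
    sOp i (prodOneAdd 1 P) = prodOneAdd 1 P := by
  rw [show prodOneAdd 1 P = ∏ k ∈ Finset.Icc 1 P, (1 + bR * Xv k) from rfl,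
    ← sHom_apply, map_prod]
  refine Finset.prod_nbij' (i := fun k => Equiv.swap i (i+1) k)
    (j := fun k => Equiv.swap i (i+1) k) ?_ ?_ ?_ ?_ ?_
  · intro k hk
    rw [Finset.mem_Icc] at hk ⊢
    exact swap_keeps hi hiP hk.1 hk.2
  · intro k hk
    rw [Finset.mem_Icc] at hk ⊢
    exact swap_keeps hi hiP hk.1 hk.2
  · intro k _; exact Equiv.swap_apply_self _ _ _
  · intro k _; exact Equiv.swap_apply_self _ _ _
  · intro k _; exact sOp_one_add i k

lemma sOp_T (i P : ℕ) (hi : 1 ≤ i) (hiP : i ≠ P) (j : ℤ) :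
    sOp i (prodOneAdd 1 P * hsym 1 P j) = prodOneAdd 1 P * hsym 1 P j := by
  rw [sOp_mul, sOp_hsym i P hi hiP, sOp_prodOneAdd i P hi hiP]

lemma sOp_Gk (i P : ℕ) (hi : 1 ≤ i) (hiP : i ≠ P) (m : ℤ) :
    sOp i (Gsk P 1 m) = Gsk P 1 m := by
  ext d : 1
  rw [coeff_sOp, coeff_Gsk, coeff_Gsk, degSum_Emap]
  refine Finset.sum_congr rfl fun s _ => ?_
  congr 1
  rw [show MvPowerSeries.coeff (R := A) (Finsupp.equivMapDomain (Equiv.swap i (i+1)) d)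
      (prodOneAdd 1 P * hsym 1 P (m + s))
    = MvPowerSeries.coeff (R := A) d (sOp i (prodOneAdd 1 P * hsym 1 P (m + s))) from rfl,
    sOp_T i P hi hiP]

lemma coeff_T_zero (P q : ℕ) (j : ℤ) (d : ℕ →₀ ℕ) (h : (degSum d : ℤ) < j) :
    MvPowerSeries.coeff (R := A) d (prodOneAdd q P * hsym q P j) = 0 := by
  classical
  rw [MvPowerSeries.coeff_mul]
  refine Finset.sum_eq_zero ?_
  rintro ⟨a, b⟩ hab
  rw [Finset.HasAntidiagonal.mem_antidiagonal] at hab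
  have hb : (degSum b : ℤ) ≠ j := by
    have hd : degSum a + degSum b = degSum d := by rw [← hab, degSum_add]
    omega
  show MvPowerSeries.coeff (R := A) a (prodOneAdd q P) * MvPowerSeries.coeff (R := A) b (hsym q P j) = 0
  rw [coeff_hsym, if_neg (fun hc => hb hc.2), mul_zero]

/-- finite partial sum of the series defining `Gsk` -/
def SPs (P q : ℕ) (m : ℤ) (K : ℕ) : R :=
  ∑ s ∈ Finset.range K,
    MvPowerSeries.C (σ := ℕ) (R := A) ((-Polynomial.X) ^ s) * (prodOneAdd q P * hsym q P (m + s))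

lemma coeff_SPs (P q : ℕ) (m : ℤ) (K : ℕ) (d : ℕ →₀ ℕ) :
    MvPowerSeries.coeff (R := A) d (SPs P q m K) =
      ∑ s ∈ Finset.range K,
        (-Polynomial.X : A) ^ s *
          MvPowerSeries.coeff (R := A) d (prodOneAdd q P * hsym q P (m + s)) := by
  rw [SPs, map_sum]
  exact Finset.sum_congr rfl fun s _ => MvPowerSeries.coeff_C_mul _ _ _

lemma coeff_Gsk_eq_SPs (P q : ℕ) (m : ℤ) (d : ℕ →₀ ℕ) (K : ℕ)
    (hK : ((degSum d : ℤ) - m).toNat + 1 ≤ K) :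
    MvPowerSeries.coeff (R := A) d (Gsk P q m) = MvPowerSeries.coeff (R := A) d (SPs P q m K) := by
  rw [coeff_Gsk, coeff_SPs]
  refine Finset.sum_subset (Finset.range_subset_range.mpr hK) ?_
  intro s _ hs
  rw [Finset.mem_range, not_lt] at hs
  rw [coeff_T_zero P q (m + s) d (by omega), mul_zero]

lemma prodOneAdd_succ (P : ℕ) : prodOneAdd 1 (P+1) = prodOneAdd 1 P * (1 + bR * Xv (P+1)) :=
  Finset.prod_Icc_succ_top (by omega) _

lemma key1 (p : ℕ) (hp : 1 ≤ p) (j : ℤ) :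
    (1 + bR * Xv (p+1)) * (prodOneAdd 1 p * hsym 1 p j)
      - (1 + bR * Xv p) * sOp p (prodOneAdd 1 p * hsym 1 p j)
    = (Xv p - Xv (p+1)) * (prodOneAdd 1 (p+1) * hsym 1 (p+1) (j-1)) := by
  obtain ⟨q, rfl⟩ : ∃ q, p = q + 1 := ⟨p - 1, by omega⟩
  have h1 : prodOneAdd 1 (q+1) = prodOneAdd 1 q * (1 + bR * Xv (q+1)) := prodOneAdd_succ q
  have h2 : prodOneAdd 1 (q+1+1) = prodOneAdd 1 q * (1 + bR * Xv (q+1)) * (1 + bR * Xv (q+1+1)) := by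
    rw [prodOneAdd_succ (q+1), h1]
  have h3 : sOp (q+1) (prodOneAdd 1 (q+1) * hsym 1 (q+1) j)
      = prodOneAdd 1 q * (1 + bR * Xv (q+1+1)) * sOp (q+1) (hsym 1 (q+1) j) := by
    rw [h1, sOp_mul, sOp_mul, sOp_prodOneAdd (q+1) q (by omega) (by omega),
      sOp_one_add, Equiv.swap_apply_left]
  have h4 := hsym_swap (q+1) (by omega) j
  have h5 : sOp (q+1) (hsym 1 (q+1) j)
      = hsym 1 (q+1) j - (Xv (q+1) - Xv (q+1+1)) * hsym 1 (q+1+1) (j-1) := by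
    rw [← h4]; ring
  rw [h3, h5, h1, h2]
  ring

lemma key_sum (p : ℕ) (hp : 1 ≤ p) (m : ℤ) (K : ℕ) :
    (1 + bR * Xv (p+1)) * SPs p 1 m K - (1 + bR * Xv p) * sOp p (SPs p 1 m K)
      = (Xv p - Xv (p+1)) * SPs (p+1) 1 (m-1) K := by
  have hsop : sOp p (SPs p 1 m K) = ∑ s ∈ Finset.range K,
      MvPowerSeries.C (σ := ℕ) (R := A) ((-Polynomial.X) ^ s) *
        sOp p (prodOneAdd 1 p * hsym 1 p (m + s)) := by
    rw [SPs, ← sHom_apply, map_sum]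
    refine Finset.sum_congr rfl fun s _ => ?_
    rw [map_mul, sHom_apply, sHom_apply, sOp_C]
  rw [hsop, SPs, SPs, Finset.mul_sum, Finset.mul_sum, Finset.mul_sum,
    ← Finset.sum_sub_distrib]
  refine Finset.sum_congr rfl fun s _ => ?_
  have hk := key1 p hp (m + s)
  have hidx : m - 1 + (s : ℤ) = m + s - 1 := by ring
  rw [hidx]
  rw [show (1 + bR * Xv (p+1)) *
        (MvPowerSeries.C (σ := ℕ) (R := A) ((-Polynomial.X) ^ s) * (prodOneAdd 1 p * hsym 1 p (m + s)))
      - (1 + bR * Xv p) *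
        (MvPowerSeries.C (σ := ℕ) (R := A) ((-Polynomial.X) ^ s) * sOp p (prodOneAdd 1 p * hsym 1 p (m + s)))
    = MvPowerSeries.C (σ := ℕ) (R := A) ((-Polynomial.X) ^ s) *
        ((1 + bR * Xv (p+1)) * (prodOneAdd 1 p * hsym 1 p (m + s))
          - (1 + bR * Xv p) * sOp p (prodOneAdd 1 p * hsym 1 p (m + s))) from by ring,
    hk]
  ring

lemma coeff_mul_congr (f g h : R) (d : ℕ →₀ ℕ)
    (H : ∀ e : ℕ →₀ ℕ, degSum e ≤ degSum d →
      MvPowerSeries.coeff (R := A) e g = MvPowerSeries.coeff (R := A) e h) :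
    MvPowerSeries.coeff (R := A) d (f * g) = MvPowerSeries.coeff (R := A) d (f * h) := by
  classical
  rw [MvPowerSeries.coeff_mul, MvPowerSeries.coeff_mul]
  refine Finset.sum_congr rfl ?_
  intro x hx
  rw [Finset.HasAntidiagonal.mem_antidiagonal] at hx
  have hble : degSum x.2 ≤ degSum d := by
    rw [← hx, degSum_add]; omega
  rw [H x.2 hble]

lemma main_eq (m : ℤ) (p : ℕ) (hp : 1 ≤ p) :
    (Xv p - Xv (p+1)) * Gsk (p+1) 1 (m-1)
      = (1 + bR * Xv (p+1)) * Gsk p 1 m - (1 + bR * Xv p) * sOp p (Gsk p 1 m) := by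
  ext d : 1
  set K := ((degSum d : ℤ) - (m-1)).toNat + 1 with hKdef
  have hmono : ∀ e : ℕ →₀ ℕ, degSum e ≤ degSum d → ((degSum e : ℤ) - m).toNat + 1 ≤ K := by
    intro e he; rw [hKdef]; omega
  have hmono' : ∀ e : ℕ →₀ ℕ, degSum e ≤ degSum d →
      ((degSum e : ℤ) - (m-1)).toNat + 1 ≤ K := by
    intro e he; rw [hKdef]; omega
  have h1 : MvPowerSeries.coeff (R := A) d ((Xv p - Xv (p+1)) * Gsk (p+1) 1 (m-1))
      = MvPowerSeries.coeff (R := A) d ((Xv p - Xv (p+1)) * SPs (p+1) 1 (m-1) K) :=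
    coeff_mul_congr _ _ _ d (fun e he => coeff_Gsk_eq_SPs (p+1) 1 (m-1) e K (hmono' e he))
  have h2 : MvPowerSeries.coeff (R := A) d ((1 + bR * Xv (p+1)) * Gsk p 1 m)
      = MvPowerSeries.coeff (R := A) d ((1 + bR * Xv (p+1)) * SPs p 1 m K) :=
    coeff_mul_congr _ _ _ d (fun e he => coeff_Gsk_eq_SPs p 1 m e K (hmono e he))
  have h3 : MvPowerSeries.coeff (R := A) d ((1 + bR * Xv p) * sOp p (Gsk p 1 m))
      = MvPowerSeries.coeff (R := A) d ((1 + bR * Xv p) * sOp p (SPs p 1 m K)) := by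
    refine coeff_mul_congr _ _ _ d ?_
    intro e he
    rw [coeff_sOp, coeff_sOp]
    exact coeff_Gsk_eq_SPs p 1 m _ K (hmono _ (by rw [degSum_Emap]; exact he))
  rw [h1, map_sub, h2, h3, ← map_sub, key_sum p hp m K]

lemma Xv_sub_ne (i : ℕ) : Xv i - Xv (i+1) ≠ (0 : R) := by
  intro h
  have h2 := congrArg (MvPowerSeries.coeff (R := A) (Finsupp.single i 1)) h
  rw [map_sub, map_zero] at h2
  have e1 : MvPowerSeries.coeff (R := A) (Finsupp.single i 1) (Xv i) = 1 :=
    MvPowerSeries.coeff_index_single_self_X i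
  have e2 : MvPowerSeries.coeff (R := A) (Finsupp.single i 1) (Xv (i+1)) = 0 := by
    classical
    rw [show Xv (i+1) = MvPowerSeries.X (i+1) from rfl,
      MvPowerSeries.coeff_index_single_X, if_neg (by omega)]
  rw [e1, e2] at h2
  simp at h2

lemma ddiff_spec (i : ℕ) (f g : R)
    (h : (Xv i - Xv (i+1)) * g
      = (1 + bR * Xv (i+1)) * f - (1 + bR * Xv i) * sOp i f) :
    ddiff i f = g := by
  have hs := Classical.epsilon_spec
    (p := fun gq : R => (Xv i - Xv (i+1)) * gq
      = (1 + bR * Xv (i+1)) * f - (1 + bR * Xv i) * sOp i f) ⟨g, h⟩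
  have hs' : (Xv i - Xv (i+1)) * ddiff i f
      = (1 + bR * Xv (i+1)) * f - (1 + bR * Xv i) * sOp i f := hs
  exact mul_left_cancel₀ (Xv_sub_ne i) (hs'.trans h.symm)

end Aux3
theorem stmt2 (m : ℤ) (p i : ℕ) (hp : 1 ≤ p) (hi : 1 ≤ i) :
    (i = p → ddiff p (Gk p m) = Gk (p+1) (m-1)) ∧
    (i ≠ p → ddiff i (Gk p m) = -bR * Gk p m) := by
  constructor
  · intro _
    exact ddiff_spec p (Gk p m) (Gk (p+1) (m-1)) (main_eq m p hp)
  · intro hip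
    refine ddiff_spec i (Gk p m) (-bR * Gk p m) ?_
    rw [show sOp i (Gk p m) = Gk p m from sOp_Gk i p hi hip m]
    ring

end
end

section
/- Let λ/μ be a skew shape of length r with flagging f/g, and let 1 ≤ k < r satisfy μ_k ≥ λ_{k+1}. Then G̃_{λ/μ,f/g} = G̃_{λ̂/μ̂,f̂/ĝ} · G̃_{λ̌/μ̌,f̌/ǧ}, where for a sequence t = (t₁,…,t_r) we write t̂ = (t₁,…,t_k) and ť = (t_{k+1},…,t_r). -/
/- Common setup: `R = ℤ[β][[x₀,x₁,x₂,…]]` with `β = Polynomial.X`; only the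
variables `x i` for `i ≥ 1` are used in the statements. -/

attribute [local instance] Classical.propDecidable

noncomputable section

lemma hsym_neg (q p : ℕ) (j : ℤ) (hj : j < 0) : hsym q p j = 0 := by
  funext d
  simp only [hsym]
  rw [if_neg]
  · rfl
  · rintro ⟨-, h2⟩
    omega

lemma intChoose_zero (c : ℤ) : intChoose c 0 = 1 := by
  unfold intChoose; split <;> simp

lemma intChoose_pascal (c : ℤ) (hc : 1 ≤ c) (s : ℕ) :
    intChoose c (s+1) = intChoose (c-1) (s+1) + intChoose (c-1) s := by
  have h0 : (0:ℤ) ≤ c := by omega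
  have h1 : (0:ℤ) ≤ c - 1 := by omega
  simp only [intChoose, if_pos h0, if_pos h1]
  have h2 : c.toNat = (c-1).toNat + 1 := by omega
  rw [h2, Nat.choose_succ_succ']
  push_cast; ring

lemma Gsk_succ (p q : ℕ) (m : ℤ) (hm : m ≤ -1) (d : ℕ →₀ ℕ) :
    Gsk p q m d + Polynomial.X * Gsk p q (m+1) d
      = MvPowerSeries.coeff (R := A) d (prodOneAdd q p * hsym q p m) := by
  have h1 : ((degSum d : ℤ) - m).toNat = ((degSum d : ℤ) - (m+1)).toNat + 1 := by omega
  simp only [Gsk]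
  rw [h1, Finset.sum_range_succ', Finset.mul_sum]
  simp only [pow_zero, Nat.cast_zero, add_zero, one_mul]
  rw [add_right_comm, ← Finset.sum_add_distrib]
  rw [Finset.sum_eq_zero, zero_add]
  intro s _
  have hidx : m + ((s:ℤ) + 1) = m + 1 + s := by ring
  push_cast
  rw [hidx, pow_succ]
  ring

lemma JT_rec (p q : ℕ) (c m : ℤ) (hc : 1 ≤ c) (hm : m ≤ -1) (d : ℕ →₀ ℕ) :
    JT p q c m d = JT p q (c-1) m d + Polynomial.X * JT p q (c-1) (m+1) d := by
  have h1 : ((degSum d : ℤ) - m).toNat = ((degSum d : ℤ) - (m+1)).toNat + 1 := by omega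
  simp only [JT]
  rw [h1, Finset.sum_range_succ', Finset.sum_range_succ' (fun s =>
    ((intChoose (c-1) s : ℤ) : A) * Polynomial.X ^ s *
      MvPowerSeries.coeff (R := A) d (Gsk p q (m + s))), Finset.mul_sum]
  simp only [pow_zero, Nat.cast_zero, add_zero, one_mul, intChoose_zero]
  have key : (∑ s ∈ Finset.range (((degSum d : ℤ) - (m + 1)).toNat + 1),
        ((intChoose c (s+1) : ℤ):A) * Polynomial.X ^ (s+1) *
          MvPowerSeries.coeff (R := A) d (Gsk p q (m + ↑(s+1)))) =
      (∑ s ∈ Finset.range (((degSum d : ℤ) - (m + 1)).toNat + 1),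
        (((intChoose (c-1) (s+1) : ℤ):A) * Polynomial.X ^ (s+1) *
            MvPowerSeries.coeff (R := A) d (Gsk p q (m + ↑(s+1))) +
          Polynomial.X * (((intChoose (c-1) s : ℤ):A) * Polynomial.X ^ s *
            MvPowerSeries.coeff (R := A) d (Gsk p q (m + 1 + ↑s))))) := by
    apply Finset.sum_congr rfl
    intro s _
    have hidx : m + (((s:ℕ):ℤ) + 1) = m + 1 + s := by ring
    push_cast
    rw [hidx, intChoose_pascal c hc s]
    push_cast
    ring
  rw [key, Finset.sum_add_distrib]
  ring

lemma JT_zero (p q : ℕ) (m : ℤ) (d : ℕ →₀ ℕ) : JT p q 0 m d = Gsk p q m d := by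
  simp only [JT]
  rw [Finset.sum_eq_single 0]
  · simp [intChoose_zero, MvPowerSeries.coeff_apply]
  · intro b _ hb
    obtain ⟨b', rfl⟩ := Nat.exists_eq_succ_of_ne_zero hb
    have : intChoose 0 (b'+1) = 0 := by
      simp [intChoose, Nat.choose_eq_zero_of_lt (Nat.succ_pos b')]
    simp [this]
  · intro h; exact absurd (Finset.mem_range.2 (Nat.succ_pos _)) h

lemma JT_vanish (p q : ℕ) (c m : ℤ) (hc : 1 ≤ c) (hcm : m + c ≤ 0) : JT p q c m = 0 := by
  obtain ⟨n, hn⟩ : ∃ n : ℕ, c = (n:ℤ) + 1 := ⟨(c-1).toNat, by omega⟩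
  subst hn
  induction n generalizing m with
  | zero =>
    funext d
    have h := JT_rec p q 1 m le_rfl (by omega) d
    norm_num at h
    rw [JT_zero, JT_zero] at h
    rw [show ((0:ℕ):ℤ) + 1 = 1 by norm_num, h, Gsk_succ p q m (by omega) d,
      hsym_neg q p m (by omega), mul_zero, map_zero]
    rfl
  | succ n ih =>
    funext d
    have h := JT_rec p q ((n:ℤ)+1+1) m (by push_cast; omega) (by omega) d
    have e1 : ((n:ℤ)+1+1) - 1 = (n:ℤ)+1 := by ring
    rw [e1] at h
    rw [show ((n+1:ℕ):ℤ) + 1 = (n:ℤ)+1+1 by push_cast; ring, h,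
      ih m (by omega) (by omega), ih (m+1) (by omega) (by omega)]
    simp
    rfl

theorem stmt13 (r : ℕ) (lam mu f g : Fin r → ℕ)
    (hlam_anti : ∀ i j : Fin r, i ≤ j → lam j ≤ lam i) (hlam_pos : ∀ i, 0 < lam i)
    (hmu_anti : ∀ i j : Fin r, i ≤ j → mu j ≤ mu i) (hmule : ∀ i, mu i ≤ lam i)
    (hf_pos : ∀ i, 0 < f i) (hg_pos : ∀ i, 0 < g i)
    (hflag : ∀ (i : Fin r) (h : (i : ℕ) + 1 < r), mu i < lam ⟨(i : ℕ) + 1, h⟩ →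
      g i ≤ g ⟨(i : ℕ) + 1, h⟩ ∧ f i ≤ f ⟨(i : ℕ) + 1, h⟩)
    (k : ℕ) (hk1 : 1 ≤ k) (hkr : k < r)
    (hmuk : lam ⟨k, hkr⟩ ≤ mu ⟨k - 1, Nat.lt_of_le_of_lt (Nat.sub_le k 1) hkr⟩) :
    GtildeSkew r lam mu f g =
      GtildeSkew k (fun i => lam (Fin.castLE hkr.le i)) (fun i => mu (Fin.castLE hkr.le i))
        (fun i => f (Fin.castLE hkr.le i)) (fun i => g (Fin.castLE hkr.le i)) *
      GtildeSkew (r - k) (fun i => lam ⟨(i : ℕ) + k, Nat.add_lt_of_lt_sub i.isLt⟩)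
        (fun i => mu ⟨(i : ℕ) + k, Nat.add_lt_of_lt_sub i.isLt⟩)
        (fun i => f ⟨(i : ℕ) + k, Nat.add_lt_of_lt_sub i.isLt⟩)
        (fun i => g ⟨(i : ℕ) + k, Nat.add_lt_of_lt_sub i.isLt⟩) := by
  have hk : k + (r - k) = r := by omega
  let e : Fin k ⊕ Fin (r-k) ≃ Fin r := finSumFinEquiv.trans (finCongr hk)
  have einl : ∀ i : Fin k, ((e (Sum.inl i) : Fin r) : ℕ) = (i : ℕ) := by
    intro i; simp [e, finCongr]
  have einr : ∀ i : Fin (r-k), ((e (Sum.inr i) : Fin r) : ℕ) = (i : ℕ) + k := by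
    intro i; simp [e, finCongr, Nat.add_comm]
  set Mbig : Matrix (Fin r) (Fin r) R := Matrix.of fun i j : Fin r =>
    JT (f i) (g j) ((i : ℤ) - (j : ℤ))
      ((lam i : ℤ) - (mu j : ℤ) + (j : ℤ) - (i : ℤ)) with hMbig
  have hsub : Mbig.submatrix e e = Matrix.fromBlocks
      (Matrix.of fun i j : Fin k =>
        JT (f (Fin.castLE hkr.le i)) (g (Fin.castLE hkr.le j)) ((i : ℤ) - (j : ℤ))
          ((lam (Fin.castLE hkr.le i) : ℤ) - (mu (Fin.castLE hkr.le j) : ℤ) + (j : ℤ) - (i : ℤ)))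
      (Matrix.of fun (i : Fin k) (j : Fin (r-k)) => Mbig (e (Sum.inl i)) (e (Sum.inr j)))
      0
      (Matrix.of fun i j : Fin (r-k) =>
        JT (f ⟨(i : ℕ) + k, Nat.add_lt_of_lt_sub i.isLt⟩) (g ⟨(j : ℕ) + k, Nat.add_lt_of_lt_sub j.isLt⟩)
          ((i : ℤ) - (j : ℤ))
          ((lam ⟨(i : ℕ) + k, Nat.add_lt_of_lt_sub i.isLt⟩ : ℤ) -
            (mu ⟨(j : ℕ) + k, Nat.add_lt_of_lt_sub j.isLt⟩ : ℤ) + (j : ℤ) - (i : ℤ))) := by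
    apply Matrix.ext
    intro i j
    cases i with
    | inl i =>
      cases j with
      | inl j =>
        have h1 : e (Sum.inl i) = Fin.castLE hkr.le i := by
          apply Fin.ext; rw [einl i]; simp
        have h2 : e (Sum.inl j) = Fin.castLE hkr.le j := by
          apply Fin.ext; rw [einl j]; simp
        simp only [Matrix.submatrix_apply, Matrix.fromBlocks_apply₁₁, h1, h2, hMbig,
          Matrix.of_apply]
        norm_num
      | inr j =>
        simp [Matrix.submatrix_apply, Matrix.fromBlocks_apply₁₂]
    | inr i =>
      cases j with
      | inl j =>
        simp only [Matrix.submatrix_apply, Matrix.fromBlocks_apply₂₁, hMbig, Matrix.of_apply,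
          Matrix.zero_apply]
        apply JT_vanish
        · rw [einr i, einl j]; push_cast; omega
        · have hrow : lam (e (Sum.inr i)) ≤ lam ⟨k, hkr⟩ := by
            apply hlam_anti
            rw [Fin.le_def, einr i]
            simp only [Fin.val_mk]; omega
          have hcol : mu ⟨k - 1, Nat.lt_of_le_of_lt (Nat.sub_le k 1) hkr⟩ ≤ mu (e (Sum.inl j)) := by
            apply hmu_anti
            rw [Fin.le_def, einl j]
            simp only [Fin.val_mk]
            have := j.isLt; omega
          have hle := le_trans (le_trans hrow hmuk) hcol
          rw [einr i, einl j]
          push_cast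
          omega
      | inr j =>
        have h1 : e (Sum.inr i) = ⟨(i : ℕ) + k, Nat.add_lt_of_lt_sub i.isLt⟩ := by
          apply Fin.ext; rw [einr i]
        have h2 : e (Sum.inr j) = ⟨(j : ℕ) + k, Nat.add_lt_of_lt_sub j.isLt⟩ := by
          apply Fin.ext; rw [einr j]
        simp only [Matrix.submatrix_apply, Matrix.fromBlocks_apply₂₂, hMbig, Matrix.of_apply,
          h1, h2, Fin.val_mk]
        exact congrArg₂ (JT _ _) (by push_cast; ring) (by push_cast; ring)
  calc GtildeSkew r lam mu f g = Mbig.det := rfl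
    _ = (Mbig.submatrix e e).det := (Matrix.det_submatrix_equiv_self e Mbig).symm
    _ = _ := by
      rw [hsub, Matrix.det_fromBlocks_zero₂₁]
      rfl

end
end
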